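/- With the notation above, if λ ∉ σ(A_N) ∪ σ(A_D), then R'(λ) := (A_N − λI)⁻¹ − (A_D − λI)⁻¹ maps H into G_λ, its range is dense in G_λ with respect to the a-norm, and a[B_λ R'(λ)u, R'(λ)v] = (u, R'(λ)v) for all u, v ∈ H. Moreover B_λ R'(λ) = Π'_λ A_N⁻¹ and R'(λ) = B_λ⁻¹ Π'_λ A_N⁻¹. -/

import Mathlib

noncomputable section

open scoped InnerProductSpace

local notation "⟪" x ", " y "⟫" => @inner ℂ _ _ x y

variable {H H1 : Type*} [NormedAddCommGroup H] [InnerProductSpace ℂ H] [CompleteSpace H]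
  [NormedAddCommGroup H1] [InnerProductSpace ℂ H1] [CompleteSpace H1]

/-- `MemA J H0 u f` says that `u` belongs to the domain `H¹_A` of the maximal
operator `A` (i.e. the functional `v ↦ a[u,v]` on `H0` is `H`-continuous) and
`A u = f`:  `a[u, v] = (f, v)` for all `v ∈ H0`. -/
def MemA (J : H1 →L[ℂ] H) (H0 : Submodule ℂ H1) (u : H1) (f : H) : Prop :=
  ∀ v ∈ H0, ⟪u, (v : H1)⟫ = ⟪f, J v⟫

/- If `λ ∉ σ(A_N) ∪ σ(A_D)` then `R'(λ) := (A_N - λ)⁻¹ - (A_D - λ)⁻¹` maps `H`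
into `G_λ`, its range is dense in `G_λ` in the `a`-norm, and
`a[B_λ R'(λ)u, R'(λ)v] = (u, R'(λ)v)` for all `u, v ∈ H`.  Moreover
`B_λ R'(λ) = Π'_λ A_N⁻¹` and `B_λ` is invertible with `R'(λ) = B_λ⁻¹ Π'_λ A_N⁻¹`. -/
theorem stmt15
    (J : H1 →L[ℂ] H) (hJinj : Function.Injective J) (hJdense : DenseRange J)
    (H0 : Submodule ℂ H1) [CompleteSpace H0]
    (hH0dense : DenseRange (fun v : H0 => J v))
    (TN : H →L[ℂ] H1) (hTN : ∀ (u : H) (v : H1), ⟪TN u, v⟫ = ⟪u, J v⟫)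
    (TD : H →L[ℂ] H1) (hTDmem : ∀ u : H, TD u ∈ H0)
    (hTD : ∀ (u : H), ∀ v ∈ H0, ⟪TD u, (v : H1)⟫ = ⟪u, J v⟫)
    (lam : ℝ)
    (RN : H →L[ℂ] H1)
    (hRN : ∀ (f : H) (u : H1), RN f = u ↔ TN (f + (lam : ℂ) • J u) = u)
    (RD : H →L[ℂ] H1)
    (hRD : ∀ (f : H) (u : H1), RD f = u ↔ TD (f + (lam : ℂ) • J u) = u)
    (Gl : Submodule ℂ H1) [CompleteSpace Gl]
    (hGl : ∀ u : H1, u ∈ Gl ↔ MemA J H0 u ((lam : ℂ) • J u))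
    (Bl : Gl →L[ℂ] Gl)
    (hBl : Bl = ContinuousLinearMap.id ℂ Gl -
      (lam : ℂ) • (Gl.orthogonalProjectionOnto.comp ((TN.comp J).comp Gl.subtypeL))) :
    ∃ hm : ∀ u : H, RN u - RD u ∈ Gl,
      -- the range of `R'(λ)` is dense in `G_λ` w.r.t. the `a`-norm
      closure (Set.range fun u : H => RN u - RD u) = (Gl : Set H1) ∧
      -- `a[B_λ R'(λ)u, R'(λ)v] = (u, R'(λ)v)`
      (∀ u v : H, ⟪((Bl ⟨RN u - RD u, hm u⟩ : Gl) : H1), RN v - RD v⟫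
          = ⟪u, J (RN v - RD v)⟫) ∧
      -- `B_λ R'(λ) = Π'_λ A_N⁻¹`
      (∀ u : H, Bl ⟨RN u - RD u, hm u⟩ = Gl.orthogonalProjectionOnto (TN u)) ∧
      -- `B_λ` is invertible, so `R'(λ) = B_λ⁻¹ Π'_λ A_N⁻¹`
      Function.Bijective Bl := by
  have lamc : (starRingEnd ℂ) ((lam : ℝ) : ℂ) = ((lam : ℝ) : ℂ) := Complex.conj_ofReal lam
  have hRNiter : ∀ f : H, TN (f + (lam : ℂ) • J (RN f)) = RN f := fun f => (hRN f (RN f)).1 rfl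
  have hRDiter : ∀ f : H, TD (f + (lam : ℂ) • J (RD f)) = RD f := fun f => (hRD f (RD f)).1 rfl
  have hRDmem : ∀ f : H, RD f ∈ H0 := fun f => (hRDiter f) ▸ hTDmem _
  have h1 : ∀ (f : H) (v : H1), ⟪RN f, v⟫ = ⟪f, J v⟫ + (lam : ℂ) * ⟪J (RN f), J v⟫ := by
    intro f v
    conv_lhs => rw [← hRNiter f]
    rw [hTN, inner_add_left, inner_smul_left, lamc]
  have h2 : ∀ f : H, ∀ v ∈ H0, ⟪RD f, v⟫ = ⟪f, J v⟫ + (lam : ℂ) * ⟪J (RD f), J v⟫ := by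
    intro f v hv
    conv_lhs => rw [← hRDiter f]
    rw [hTD _ v hv, inner_add_left, inner_smul_left, lamc]
  have hGlmem : ∀ z ∈ Gl, ∀ v ∈ H0, ⟪z, v⟫ = (lam : ℂ) * ⟪J z, J v⟫ := by
    intro z hz v hv
    have h := (hGl z).1 hz v hv
    rwa [inner_smul_left, lamc] at h
  have hGlmem' : ∀ z ∈ Gl, ∀ v ∈ H0, ⟪v, z⟫ = (lam : ℂ) * ⟪J v, J z⟫ := by
    intro z hz v hv
    rw [← inner_conj_symm, hGlmem z hz v hv, map_mul, lamc, inner_conj_symm]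
  have hm : ∀ u : H, RN u - RD u ∈ Gl := by
    intro u
    rw [hGl]
    intro v hv
    rw [inner_sub_left, h1 u v, h2 u v hv, inner_smul_left, lamc, map_sub, inner_sub_left]
    ring
  have hRz : ∀ u : H, ∀ z ∈ Gl,
      ⟪RN u - RD u, z⟫ = ⟪u, J z⟫ + (lam : ℂ) * (⟪J (RN u), J z⟫ - ⟪J (RD u), J z⟫) := by
    intro u z hz
    rw [inner_sub_left, h1 u z, hGlmem' z hz (RD u) (hRDmem u)]
    ring
  have hproj : ∀ x : H1, ∀ z ∈ Gl, ⟪((Gl.orthogonalProjectionOnto x : Gl) : H1), z⟫ = ⟪x, z⟫ := by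
    intro x z hz
    have h : ⟪x - (Gl.orthogonalProjectionOnto x : H1), z⟫ = 0 := by
      have h' := Gl.starProjection_inner_eq_zero x z hz; rwa [Submodule.starProjection_apply] at h'
    rw [inner_sub_left] at h
    linear_combination -h
  have hBform : ∀ w : Gl, ∀ z ∈ Gl,
      ⟪((Bl w : Gl) : H1), z⟫ = ⟪(w : H1), z⟫ - (lam : ℂ) * ⟪J (w : H1), J z⟫ := by
    intro w z hz
    rw [hBl]
    simp only [ContinuousLinearMap.sub_apply, ContinuousLinearMap.id_apply,
      ContinuousLinearMap.smul_apply, ContinuousLinearMap.comp_apply,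
      Submodule.coe_subtypeL, Submodule.subtype_apply]
    rw [Submodule.coe_sub, SetLike.val_smul, inner_sub_left, inner_smul_left, lamc,
      hproj _ z hz, hTN]
  have glext : ∀ x y : Gl, (∀ z ∈ Gl, ⟪(x : H1), z⟫ = ⟪(y : H1), z⟫) → x = y := by
    intro x y hxy
    have h0 : ⟪(x : H1) - (y : H1), (x : H1) - (y : H1)⟫ = 0 := by
      rw [inner_sub_left, hxy _ (sub_mem x.2 y.2), sub_self]
    exact Subtype.ext (sub_eq_zero.mp (inner_self_eq_zero.mp h0))
  have hBlR : ∀ u : H, ∀ z ∈ Gl, ⟪((Bl ⟨RN u - RD u, hm u⟩ : Gl) : H1), z⟫ = ⟪u, J z⟫ := by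
    intro u z hz
    rw [hBform ⟨RN u - RD u, hm u⟩ z hz]
    simp only
    rw [hRz u z hz, map_sub, inner_sub_left]
    ring
  have claim3 : ∀ u : H, Bl ⟨RN u - RD u, hm u⟩ = Gl.orthogonalProjectionOnto (TN u) := by
    intro u
    apply glext
    intro z hz
    rw [hBlR u z hz, hproj (TN u) z hz, hTN]
  have hCN : ∀ g : H1,
      g + (lam : ℂ) • RN (J g) - (lam : ℂ) • TN (J (g + (lam : ℂ) • RN (J g))) = g := by
    intro g
    calc g + (lam : ℂ) • RN (J g) - (lam : ℂ) • TN (J (g + (lam : ℂ) • RN (J g)))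
        = g + (lam : ℂ) • RN (J g) - (lam : ℂ) • TN (J g + (lam : ℂ) • J (RN (J g))) := by
          rw [map_add, map_smul]
      _ = g + (lam : ℂ) • RN (J g) - (lam : ℂ) • RN (J g) := by rw [hRNiter (J g)]
      _ = g := by abel
  have hCD : ∀ g : H1,
      g + (lam : ℂ) • RD (J g) - (lam : ℂ) • TD (J (g + (lam : ℂ) • RD (J g))) = g := by
    intro g
    calc g + (lam : ℂ) • RD (J g) - (lam : ℂ) • TD (J (g + (lam : ℂ) • RD (J g)))
        = g + (lam : ℂ) • RD (J g) - (lam : ℂ) • TD (J g + (lam : ℂ) • J (RD (J g))) := by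
          rw [map_add, map_smul]
      _ = g + (lam : ℂ) • RD (J g) - (lam : ℂ) • RD (J g) := by rw [hRDiter (J g)]
      _ = g := by abel
  have decomp : ∀ hh : H1, ∃ u0 ∈ H0, hh - u0 ∈ Gl := by
    intro hh
    obtain ⟨p, hpmem, hpv⟩ :
        ∃ p ∈ H0, ∀ v ∈ H0, ⟪p, v⟫ = ⟪hh, v⟫ - (lam : ℂ) * ⟪J hh, J v⟫ := by
      refine ⟨((H0.orthogonalProjectionOnto hh : H0) : H1) - (lam : ℂ) • TD (J hh),
        sub_mem (H0.orthogonalProjectionOnto hh).2 (Submodule.smul_mem _ _ (hTDmem _)), ?_⟩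
      intro v hv
      have h0 : ⟪hh - (H0.orthogonalProjectionOnto hh : H1), v⟫ = 0 := by
        have h' := H0.starProjection_inner_eq_zero hh v hv; rwa [Submodule.starProjection_apply] at h'
      rw [inner_sub_left] at h0
      rw [inner_sub_left, inner_smul_left, lamc, hTD _ v hv]
      linear_combination -h0
    refine ⟨p + (lam : ℂ) • RD (J p),
      add_mem hpmem (Submodule.smul_mem _ _ (hRDmem _)), ?_⟩
    rw [hGl]
    intro v hv
    have e1 := congrArg (fun x : H1 => ⟪x, v⟫) (hCD p)
    rw [inner_sub_left, inner_smul_left, lamc, hTD _ v hv, hpv v hv] at e1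
    rw [inner_sub_left, inner_smul_left, lamc, map_sub, inner_sub_left]
    linear_combination -e1
  have hinj : Function.Injective Bl := by
    intro a b hab
    have hz0 : Bl (a - b) = 0 := by rw [map_sub, hab, sub_self]
    have hwGl : ((a - b : Gl) : H1) ∈ Gl := (a - b).2
    have key : ∀ z : H1,
        ⟪((a - b : Gl) : H1) - (lam : ℂ) • TN (J ((a - b : Gl) : H1)), z⟫ = 0 := by
      have kGl : ∀ z ∈ Gl,
          ⟪((a - b : Gl) : H1), z⟫ - (lam : ℂ) * ⟪J ((a - b : Gl) : H1), J z⟫ = 0 := by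
        intro z hzm
        have h := hBform (a - b) z hzm
        rw [hz0] at h
        simp only [ZeroMemClass.coe_zero, inner_zero_left] at h
        linear_combination -h
      have kH0 : ∀ z ∈ H0,
          ⟪((a - b : Gl) : H1), z⟫ - (lam : ℂ) * ⟪J ((a - b : Gl) : H1), J z⟫ = 0 := by
        intro z hzm
        have h := hGlmem _ hwGl z hzm
        linear_combination h
      intro z
      obtain ⟨u0, hu0m, hgm⟩ := decomp z
      have e1 := kH0 u0 hu0m
      have e2 := kGl (z - u0) hgm
      rw [inner_sub_right, map_sub, inner_sub_right] at e2
      rw [inner_sub_left, inner_smul_left, lamc, hTN]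
      linear_combination e1 + e2
    have hw0 : ((a - b : Gl) : H1) - (lam : ℂ) • TN (J ((a - b : Gl) : H1)) = 0 :=
      inner_self_eq_zero.mp (key _)
    have hRN0 : RN 0 = ((a - b : Gl) : H1) := by
      refine (hRN 0 _).2 ?_
      rw [zero_add, map_smul]
      exact (sub_eq_zero.mp hw0).symm
    have hab0 : a - b = 0 := by
      apply Subtype.ext
      have : ((a - b : Gl) : H1) = 0 := by rw [← hRN0, map_zero]
      simpa using this
    exact sub_eq_zero.mp hab0
  have hsurj : Function.Surjective Bl := by
    intro g
    obtain ⟨u0, hu0m, hwGl⟩ := decomp ((g : H1) + (lam : ℂ) • RN (J (g : H1)))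
    refine ⟨⟨(g : H1) + (lam : ℂ) • RN (J (g : H1)) - u0, hwGl⟩, ?_⟩
    apply glext
    intro z hz
    rw [hBform ⟨(g : H1) + (lam : ℂ) • RN (J (g : H1)) - u0, hwGl⟩ z hz]
    simp only
    have e1 : ⟪u0, z⟫ = (lam : ℂ) * ⟪J u0, J z⟫ := hGlmem' z hz u0 hu0m
    have e2 := congrArg (fun x : H1 => ⟪x, z⟫) (hCN (g : H1))
    rw [inner_sub_left, inner_smul_left, lamc, hTN] at e2
    rw [inner_sub_left, map_sub, inner_sub_left]
    linear_combination e2 - e1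
  refine ⟨hm, ?_, fun u v => hBlR u (RN v - RD v) (hm v), claim3, hinj, hsurj⟩
  -- density
  have hGlclosed : IsClosed (Gl : Set H1) :=
    (completeSpace_coe_iff_isComplete.mp ‹CompleteSpace Gl›).isClosed
  have hset : (Set.range fun u : H => RN u - RD u)
      = ((LinearMap.range ((RN - RD : H →L[ℂ] H1) : H →ₗ[ℂ] H1) : Submodule ℂ H1) : Set H1) := by
    ext x
    simp [ContinuousLinearMap.sub_apply]
  set K := (LinearMap.range ((RN - RD : H →L[ℂ] H1) : H →ₗ[ℂ] H1)).topologicalClosure with hKdef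
  haveI : CompleteSpace K := (Submodule.isClosed_topologicalClosure _).completeSpace_coe
  have hKle : K ≤ Gl := by
    refine Submodule.topologicalClosure_minimal _ ?_ hGlclosed
    rintro x ⟨u, rfl⟩
    exact hm u
  have hGlK : Gl ≤ K := by
    intro x hxGl
    have hyGl : x - ((K.orthogonalProjectionOnto x : K) : H1) ∈ Gl :=
      sub_mem hxGl (hKle (K.orthogonalProjectionOnto x).2)
    obtain ⟨b, hb⟩ := hsurj ⟨_, hyGl⟩
    have hval : ∀ u : H, ⟪u, J (b : H1)⟫ = 0 := by
      intro u
      have h7 : ⟪x - ((K.orthogonalProjectionOnto x : K) : H1), RN u - RD u⟫ = 0 := by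
        have h' := K.starProjection_inner_eq_zero x (RN u - RD u)
          ((LinearMap.range ((RN - RD : H →L[ℂ] H1) : H →ₗ[ℂ] H1)).le_topologicalClosure ⟨u, rfl⟩)
        rwa [Submodule.starProjection_apply] at h'
      have hyb : x - ((K.orthogonalProjectionOnto x : K) : H1) = ((Bl b : Gl) : H1) := by
        rw [hb]
      rw [hyb, hBform b (RN u - RD u) (hm u)] at h7
      have h8 : ⟪RN u - RD u, (b : H1)⟫ - (lam : ℂ) * ⟪J (RN u - RD u), J (b : H1)⟫ = 0 := by
        have h9 := congrArg (starRingEnd ℂ) h7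
        simpa [map_sub, map_mul, lamc, inner_conj_symm] using h9
      rw [← hBform ⟨RN u - RD u, hm u⟩ (b : H1) b.2, hBlR u (b : H1) b.2] at h8
      exact h8
    have hJb : J (b : H1) = 0 := by
      have h := hval (J (b : H1))
      exact inner_self_eq_zero.mp h
    have hb0 : b = 0 := Subtype.ext (hJinj (by simp [hJb]))
    have hy0 : x - ((K.orthogonalProjectionOnto x : K) : H1) = 0 := by
      have : (⟨_, hyGl⟩ : Gl) = 0 := by rw [← hb, hb0, map_zero]
      simpa using congrArg (fun w : Gl => (w : H1)) this
    have hx : x = ((K.orthogonalProjectionOnto x : K) : H1) := sub_eq_zero.mp hy0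
    rw [hx]
    exact (K.orthogonalProjectionOnto x).2
  have hKeq : K = Gl := le_antisymm hKle hGlK
  rw [hset, ← Submodule.topologicalClosure_coe, ← hKdef, hKeq]

end
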